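/- If σ is a reasonable strategy that admits no strict improvement (i.e., there is no edge (s,t) ∈ E_0 with V_σ(s) ≺ ℘(s) + V_σ(t)), then V_σ(s) = ∞ for every node s in player 0's winning set W_0 of the underlying parity game. -/

import Mathlib

open scoped Classical

/-- The order `≺` on integer color profiles `ℤ^d`: compare at the largest index where
they differ; at an even index the larger entry wins, at an odd index the smaller one. -/
def FinLt {d : ℕ} (p q : Fin d → ℤ) : Prop :=
  ∃ k : Fin d, p k ≠ q k ∧ (∀ j, k < j → p j = q j) ∧
    ((Even (k : ℕ) ∧ p k < q k) ∨ (Odd (k : ℕ) ∧ q k < p k))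

/-- Reflexive closure `≼` of `FinLt`. -/
def FinLe {d : ℕ} (p q : Fin d → ℤ) : Prop := p = q ∨ FinLt p q

/-- Color profiles: `ℤ^d` together with `-∞` (`bot`) and `∞` (`top`). -/
inductive Prof (d : ℕ) where
  | bot : Prof d
  | fin : (Fin d → ℤ) → Prof d
  | top : Prof d

/-- The order `≺` on color profiles: `-∞` is the bottom element, `∞` the top element,
finite profiles are compared by `FinLt`. -/
def Prof.Lt {d : ℕ} : Prof d → Prof d → Prop
  | .bot, .bot => False
  | .bot, .fin _ => True
  | .bot, .top => True
  | .fin _, .bot => False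
  | .fin p, .fin q => FinLt p q
  | .fin _, .top => True
  | .top, _ => False

/-- Reflexive closure `≼` of `Prof.Lt`. -/
def Prof.Le {d : ℕ} (p q : Prof d) : Prop := p = q ∨ Prof.Lt p q

/-- Adding a vector in `ℤ^d` to a profile; `±∞` are absorbing. -/
def Prof.add {d : ℕ} : Prof d → (Fin d → ℤ) → Prof d
  | .bot, _ => .bot
  | .fin p, q => .fin (p + q)
  | .top, _ => .top

/-- A parity game arena: a finite directed graph, each node owned by player 0 or 1 and
colored by a color in `{0,…,d-1}`; every node has at least one successor. -/
structure PGA (V : Type) (d : ℕ) where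
  edge : V → V → Prop
  owner : V → Fin 2
  color : V → Fin d
  succ : ∀ v, ∃ w, edge v w

variable {V : Type} {d : ℕ}

/-- The profile `℘(s)` of a single vertex: the unit vector at its color. -/
def unitProf (A : PGA V d) (s : V) : Fin d → ℤ := fun k => if A.color s = k then 1 else 0

/-- The color profile `℘(π)` of a finite sequence of vertices: how often each color occurs. -/
def listProf (A : PGA V d) (L : List V) : Fin d → ℤ := fun k => ((L.map A.color).count k : ℤ)

/-- `℘(s) + p` for a vertex `s` and a profile `p`. -/
def addV (A : PGA V d) (s : V) (p : Prof d) : Prof d := p.add (unitProf A s)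

/-- Edges of the escape arena `A_⊥` over `Option V`, where `none` is the sink `⊥`:
all edges of `A`, plus an edge from every player-0 node to `⊥`; `⊥` has no outgoing edges. -/
def EdgeB (A : PGA V d) : Option V → Option V → Prop
  | some u, some v => A.edge u v
  | some u, none => A.owner u = 0
  | none, _ => False

/-- A (memoryless, possibly non-deterministic) strategy of player 0 in `A_⊥`:
a set of player-0 edges giving every player-0 node at least one successor. -/
def Strategy0 (A : PGA V d) (σ : V → Option V → Prop) : Prop :=
  (∀ s t, σ s t → A.owner s = 0 ∧ EdgeB A (some s) t) ∧
  (∀ s, A.owner s = 0 → ∃ t, σ s t)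

/-- A (memoryless, possibly non-deterministic) strategy of player 1 (who never moves to `⊥`). -/
def Strategy1 (A : PGA V d) (τ : V → V → Prop) : Prop :=
  (∀ s t, τ s t → A.owner s = 1 ∧ A.edge s t) ∧
  (∀ s, A.owner s = 1 → ∃ t, τ s t)

/-- A strategy is deterministic if it picks at most one successor per node. -/
def Deterministic (σ : V → Option V → Prop) : Prop :=
  ∀ s t t', σ s t → σ s t' → t = t'

/-- Edges of `A_⊥` restricted to a player-0 strategy `σ` that stay inside `V`
(cycles of `A_⊥|σ` never pass through `⊥`). -/
def EdgeSig (A : PGA V d) (σ : V → Option V → Prop) (u v : V) : Prop :=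
  (A.owner u = 1 ∧ A.edge u v) ∨ σ u (some v)

/-- A (nonempty) cycle in `A_⊥|σ`: consecutive edges plus the wrap-around edge. -/
def CycleIn (A : PGA V d) (σ : V → Option V → Prop) (L : List V) : Prop :=
  L ≠ [] ∧ List.Chain' (EdgeSig A σ) L ∧
  ∀ a b, L.head? = some a → L.getLast? = some b → EdgeSig A σ b a

/-- A player-0 strategy is reasonable if `A_⊥|σ` has no 1-dominated cycle,
i.e. on every cycle the dominating (maximal) color is even. -/
def Reasonable (A : PGA V d) (σ : V → Option V → Prop) : Prop :=
  ∀ L, CycleIn A σ L → ∀ v ∈ L, (∀ w ∈ L, A.color w ≤ A.color v) → Even ((A.color v : ℕ))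

/-- One step of a play in `A_⊥` with player 0 using `σ` and player 1 using `τ`;
the sink `⊥` is absorbing. -/
def PlayStep (A : PGA V d) (σ : V → Option V → Prop) (τ : V → V → Prop) :
    Option V → Option V → Prop
  | none, y => y = none
  | some u, y => (A.owner u = 0 ∧ σ u y) ∨ (A.owner u = 1 ∧ ∃ v, y = some v ∧ τ u v)

/-- A play from `s` in `A_⊥|σ,τ` (modelled with absorbing sink). -/
def IsPlay (A : PGA V d) (σ : V → Option V → Prop) (τ : V → V → Prop)
    (s : V) (π : ℕ → Option V) : Prop :=
  π 0 = some s ∧ ∀ n, PlayStep A σ τ (π n) (π (n + 1))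

/-- One step of a play in `A_⊥` with player 0 using `σ`, player 1 unconstrained. -/
def PlayStepB (A : PGA V d) (σ : V → Option V → Prop) : Option V → Option V → Prop
  | none, y => y = none
  | some u, y => (A.owner u = 0 ∧ σ u y) ∨ (A.owner u = 1 ∧ ∃ v, y = some v ∧ A.edge u v)

/-- A play from `s` in `A_⊥|σ` against an arbitrary player 1. -/
def IsPlayB (A : PGA V d) (σ : V → Option V → Prop) (s : V) (π : ℕ → Option V) : Prop :=
  π 0 = some s ∧ ∀ n, PlayStepB A σ (π n) (π (n + 1))

/-- Color `k` occurs at position `n` of the play `π`. -/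
def ColorAt (A : PGA V d) (π : ℕ → Option V) (n : ℕ) (k : Fin d) : Prop :=
  ∃ v, π n = some v ∧ A.color v = k

/-- An infinite play of `A_⊥` (never reaching `⊥`) is won by player 0 iff the maximal color
occurring infinitely often is even. -/
def Won0B (A : PGA V d) (π : ℕ → Option V) : Prop :=
  ∃ k : Fin d, Even ((k : ℕ)) ∧ (∀ N, ∃ n ≥ N, ColorAt A π n k) ∧
    ∀ j : Fin d, k < j → ∃ N, ∀ n ≥ N, ¬ ColorAt A π n j

/-- The value `℘(π)` of a play in `A_⊥`: for a finite play (reaching `⊥`), the color profile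
of its vertices; for an infinite play, `∞` if player 0 wins it and `-∞` otherwise. -/
noncomputable def PlayValue (A : PGA V d) (π : ℕ → Option V) : Prof d :=
  if h : ∃ n, π n = none then
    .fin (fun k =>
      (((Finset.range (Nat.find h)).filter (fun n => ColorAt A π n k)).card : ℤ))
  else if Won0B A π then .top else .bot

/-- `p` is the `≺`-maximum of the set `S` of profiles. -/
def IsMaxOf {d : ℕ} (S : Set (Prof d)) (p : Prof d) : Prop := p ∈ S ∧ ∀ q ∈ S, Prof.Le q p

/-- `p` is the `≺`-minimum of the set `S` of profiles. -/
def IsMinOf {d : ℕ} (S : Set (Prof d)) (p : Prof d) : Prop := p ∈ S ∧ ∀ q ∈ S, Prof.Le p q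

/-- `W` is the valuation `𝒱_σ` of the player-0 strategy `σ`: `W(⊥) = ō`, and `W(s)` is the
`≺`-minimal value player 1 can guarantee (by a memoryless strategy) in any play from `s`
in `A_⊥|σ`. -/
def IsValuation (A : PGA V d) (σ : V → Option V → Prop) (W : Option V → Prof d) : Prop :=
  W none = .fin 0 ∧
  ∀ s : V, IsMinOf
    { p | ∃ τ, Strategy1 A τ ∧
        IsMaxOf { q | ∃ π, IsPlay A σ τ s π ∧ q = PlayValue A π } p }
    (W (some s))

/-- `(s,t)` is an improvement of `σ` w.r.t. the valuation `W`: a player-0 edge with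
`W(s) ≼ ℘(s) + W(t)`.  `I_σ` is the set (strategy) of all improvements. -/
def Improvement (A : PGA V d) (W : Option V → Prof d) (s : V) (t : Option V) : Prop :=
  A.owner s = 0 ∧ EdgeB A (some s) t ∧ Prof.Le (W (some s)) (addV A s (W t))

/-- `(s,t)` is a strict improvement of `σ` w.r.t. `W`: a player-0 edge with
`W(s) ≺ ℘(s) + W(t)`. -/
def StrictImp (A : PGA V d) (W : Option V → Prof d) (s : V) (t : Option V) : Prop :=
  A.owner s = 0 ∧ EdgeB A (some s) t ∧ Prof.Lt (W (some s)) (addV A s (W t))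

/-- A memoryless strategy of player 0 in the original parity game arena `A`. -/
def Strat0A (A : PGA V d) (σ : V → V → Prop) : Prop :=
  (∀ s t, σ s t → A.owner s = 0 ∧ A.edge s t) ∧ (∀ s, A.owner s = 0 → ∃ t, σ s t)

/-- A play in `A` from `s` where player 0 follows `σ` and player 1 is unconstrained. -/
def PlayA (A : PGA V d) (σ : V → V → Prop) (s : V) (π : ℕ → V) : Prop :=
  π 0 = s ∧ ∀ n, (A.owner (π n) = 0 → σ (π n) (π (n + 1))) ∧
    (A.owner (π n) = 1 → A.edge (π n) (π (n + 1)))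

/-- Parity winning condition in `A` for player 0: the maximal color seen infinitely often is even. -/
def Won0A (A : PGA V d) (π : ℕ → V) : Prop :=
  ∃ k : Fin d, Even ((k : ℕ)) ∧ (∀ N, ∃ n ≥ N, A.color (π n) = k) ∧
    ∀ j : Fin d, k < j → ∃ N, ∀ n ≥ N, A.color (π n) ≠ j

/-- Player 0 wins the node `s` of the parity game arena `A` (with a memoryless strategy). -/
def Win0 (A : PGA V d) (s : V) : Prop :=
  ∃ σ, Strat0A A σ ∧ ∀ π, PlayA A σ s π → Won0A A π

/-- An acyclic path of `A_⊥` terminating in `⊥`: pairwise distinct vertices, consecutive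
edges of `A`, and the last vertex owned by player 0 (so it has the edge to `⊥`). -/
def AcyclicToBot (A : PGA V d) (L : List V) : Prop :=
  L.Nodup ∧ List.Chain' A.edge L ∧ ∀ b, L.getLast? = some b → A.owner b = 0


/-! ### Auxiliary lemmas -/

section Aux

theorem finLt_irrefl {d : ℕ} (p : Fin d → ℤ) : ¬ FinLt p p := by
  rintro ⟨k, hk, -, -⟩; exact hk rfl

theorem finLt_total {d : ℕ} {p q : Fin d → ℤ} (h : p ≠ q) : FinLt p q ∨ FinLt q p := by
  classical
  have hne : (Finset.univ.filter (fun k => p k ≠ q k)).Nonempty := by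
    by_contra hc
    apply h; funext k
    by_contra hk
    exact hc ⟨k, Finset.mem_filter.mpr ⟨Finset.mem_univ _, hk⟩⟩
  set D := Finset.univ.filter (fun k => p k ≠ q k) with hD
  set k := D.max' hne with hk
  have hkD : k ∈ D := D.max'_mem hne
  have hkne : p k ≠ q k := (Finset.mem_filter.mp hkD).2
  have habove : ∀ j, k < j → p j = q j := by
    intro j hj
    by_contra hjne
    have : j ∈ D := Finset.mem_filter.mpr ⟨Finset.mem_univ _, hjne⟩
    exact absurd (Finset.le_max' D j this) (not_le.mpr hj)
  rcases Nat.even_or_odd (k : ℕ) with hev | hod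
  · rcases lt_or_gt_of_ne hkne with hlt | hgt
    · exact Or.inl ⟨k, hkne, habove, Or.inl ⟨hev, hlt⟩⟩
    · exact Or.inr ⟨k, hkne.symm, fun j hj => (habove j hj).symm, Or.inl ⟨hev, hgt⟩⟩
  · rcases lt_or_gt_of_ne hkne with hlt | hgt
    · exact Or.inr ⟨k, hkne.symm, fun j hj => (habove j hj).symm, Or.inr ⟨hod, hlt⟩⟩
    · exact Or.inl ⟨k, hkne, habove, Or.inr ⟨hod, hgt⟩⟩

theorem finLt_trans {d : ℕ} {p q r : Fin d → ℤ} (h1 : FinLt p q) (h2 : FinLt q r) :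
    FinLt p r := by
  obtain ⟨k1, hne1, hab1, hpar1⟩ := h1
  obtain ⟨k2, hne2, hab2, hpar2⟩ := h2
  rcases lt_trichotomy k1 k2 with h | h | h
  · refine ⟨k2, ?_, ?_, ?_⟩
    · rw [hab1 k2 h]; exact hne2
    · intro j hj; rw [hab1 j (h.trans hj), hab2 j hj]
    · rw [hab1 k2 h]; exact hpar2
  · subst h
    have hne : p k1 ≠ r k1 := by
      rcases hpar1 with ⟨hev, hlt1⟩ | ⟨hod, hlt1⟩ <;>
        rcases hpar2 with ⟨hev2, hlt2⟩ | ⟨hod2, hlt2⟩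
      · exact ne_of_lt (hlt1.trans hlt2)
      · exact absurd hod2 (Nat.not_odd_iff_even.mpr hev)
      · exact absurd hod (Nat.not_odd_iff_even.mpr hev2)
      · exact (ne_of_lt (hlt2.trans hlt1)).symm
    refine ⟨k1, hne, fun j hj => (hab1 j hj).trans (hab2 j hj), ?_⟩
    rcases hpar1 with ⟨hev, hlt1⟩ | ⟨hod, hlt1⟩
    · rcases hpar2 with ⟨hev2, hlt2⟩ | ⟨hod2, hlt2⟩
      · exact Or.inl ⟨hev, hlt1.trans hlt2⟩
      · exact absurd hod2 (Nat.not_odd_iff_even.mpr hev)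
    · rcases hpar2 with ⟨hev2, hlt2⟩ | ⟨hod2, hlt2⟩
      · exact absurd hod (Nat.not_odd_iff_even.mpr hev2)
      · exact Or.inr ⟨hod, hlt2.trans hlt1⟩
  · refine ⟨k1, ?_, ?_, ?_⟩
    · rw [← hab2 k1 h]; exact hne1
    · intro j hj; rw [hab1 j hj, hab2 j (h.trans hj)]
    · rw [← hab2 k1 h]; exact hpar1

theorem finLe_refl {d : ℕ} (p : Fin d → ℤ) : FinLe p p := Or.inl rfl

theorem finLe_trans {d : ℕ} {p q r : Fin d → ℤ} (h1 : FinLe p q) (h2 : FinLe q r) :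
    FinLe p r := by
  rcases h1 with rfl | h1
  · exact h2
  · rcases h2 with rfl | h2
    · exact Or.inr h1
    · exact Or.inr (finLt_trans h1 h2)

theorem finLt_add_right {d : ℕ} {p q : Fin d → ℤ} (c : Fin d → ℤ) (h : FinLt p q) :
    FinLt (p + c) (q + c) := by
  obtain ⟨k, hne, hab, hpar⟩ := h
  refine ⟨k, ?_, ?_, ?_⟩
  · simp only [Pi.add_apply]
    intro hc; exact hne (by linarith [hc])
  · intro j hj; simp only [Pi.add_apply, hab j hj]
  · rcases hpar with ⟨hev, hlt⟩ | ⟨hod, hlt⟩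
    · exact Or.inl ⟨hev, by simp only [Pi.add_apply]; linarith⟩
    · exact Or.inr ⟨hod, by simp only [Pi.add_apply]; linarith⟩

theorem finLe_add_right {d : ℕ} {p q : Fin d → ℤ} (c : Fin d → ℤ) (h : FinLe p q) :
    FinLe (p + c) (q + c) := by
  rcases h with rfl | h
  · exact Or.inl rfl
  · exact Or.inr (finLt_add_right c h)

theorem finLe_of_add_le_add {d : ℕ} {p q c : Fin d → ℤ} (h : FinLe (p + c) (q + c)) :
    FinLe p q := by
  have := finLe_add_right (-c) h
  simpa [add_assoc] using this

theorem prof_le_refl {d : ℕ} (p : Prof d) : Prof.Le p p := Or.inl rfl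

theorem prof_le_top {d : ℕ} (p : Prof d) : Prof.Le p Prof.top := by
  cases p with
  | bot => exact Or.inr trivial
  | fin p => exact Or.inr trivial
  | top => exact Or.inl rfl

theorem prof_bot_le {d : ℕ} (p : Prof d) : Prof.Le Prof.bot p := by
  cases p with
  | bot => exact Or.inl rfl
  | fin p => exact Or.inr trivial
  | top => exact Or.inr trivial

theorem prof_top_le {d : ℕ} {p : Prof d} (h : Prof.Le Prof.top p) : p = Prof.top := by
  rcases h with h | h
  · exact h.symm
  · cases p <;> exact h.elim

theorem prof_le_of_not_lt {d : ℕ} {p q : Prof d} (h : ¬ Prof.Lt p q) : Prof.Le q p := by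
  cases p with
  | bot =>
    cases q with
    | bot => exact Or.inl rfl
    | fin q => exact absurd trivial h
    | top => exact absurd trivial h
  | fin p =>
    cases q with
    | bot => exact Or.inr trivial
    | fin q =>
      by_cases he : p = q
      · exact Or.inl (by rw [he])
      · rcases finLt_total he with h1 | h1
        · exact absurd h1 h
        · exact Or.inr h1
    | top => exact absurd trivial h
  | top =>
    cases q with
    | bot => exact Or.inr trivial
    | fin q => exact Or.inr trivial
    | top => exact Or.inl rfl

theorem prof_add_le_add {d : ℕ} {p q : Prof d} (c : Fin d → ℤ) (h : Prof.Le p q) :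
    Prof.Le (p.add c) (q.add c) := by
  rcases h with rfl | h
  · exact Or.inl rfl
  · cases p <;> cases q <;> try exact h.elim
    · exact Or.inr trivial
    · exact Or.inr trivial
    · exact Or.inr (finLt_add_right c h)
    · exact Or.inr trivial

theorem prof_le_of_add_le_add {d : ℕ} {p q : Prof d} {c : Fin d → ℤ}
    (h : Prof.Le (p.add c) (q.add c)) : Prof.Le p q := by
  cases p with
  | bot => exact prof_bot_le q
  | fin p =>
    cases q with
    | bot =>
      rcases h with h | h
      · exact absurd h (by simp [Prof.add])
      · exact h.elim
    | fin q =>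
      rcases h with h | h
      · have hpc : p + c = q + c := by
          have := h; simpa [Prof.add, Prof.fin.injEq] using this
        exact Or.inl (congrArg Prof.fin (add_right_cancel hpc))
      · exact Or.inr (show FinLt p q by
          have := finLt_add_right (-c) h
          simpa [add_assoc] using this)
    | top => exact Or.inr trivial
  | top =>
    have : q.add c = Prof.top := prof_top_le (by cases q <;> simpa [Prof.add] using h)
    cases q with
    | bot => exact absurd this (by simp [Prof.add])
    | fin q => exact absurd this (by simp [Prof.add])
    | top => exact Or.inl rfl

end Aux


section Plays

variable {V : Type} {d : ℕ}

theorem colorAt_tail (A : PGA V d) (π : ℕ → Option V) (n : ℕ) (k : Fin d) :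
    ColorAt A (fun m => π (m + 1)) n k ↔ ColorAt A π (n + 1) k := Iff.rfl

theorem won0B_tail (A : PGA V d) (π : ℕ → Option V) :
    Won0B A π ↔ Won0B A (fun n => π (n + 1)) := by
  constructor
  · rintro ⟨k, hk, hio, hfin⟩
    refine ⟨k, hk, ?_, ?_⟩
    · intro N
      obtain ⟨n, hn, hc⟩ := hio (N + 1)
      refine ⟨n - 1, by omega, ?_⟩
      rw [colorAt_tail]
      have hh : n - 1 + 1 = n := by omega
      rwa [hh]
    · intro j hj
      obtain ⟨N, hN⟩ := hfin j hj
      exact ⟨N, fun n hn => hN (n + 1) (by omega)⟩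
  · rintro ⟨k, hk, hio, hfin⟩
    refine ⟨k, hk, ?_, ?_⟩
    · intro N
      obtain ⟨n, hn, hc⟩ := hio N
      exact ⟨n + 1, by omega, hc⟩
    · intro j hj
      obtain ⟨N, hN⟩ := hfin j hj
      refine ⟨N + 1, fun n hn => ?_⟩
      have hh : n - 1 + 1 = n := by omega
      have := hN (n - 1) (by omega)
      rw [colorAt_tail, hh] at this
      exact this

theorem playValue_tail (A : PGA V d) (π : ℕ → Option V) (u : V) (h0 : π 0 = some u) :
    PlayValue A π = addV A u (PlayValue A (fun n => π (n + 1))) := by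
  classical
  by_cases h : ∃ n, π n = none
  · have h' : ∃ n, (fun n => π (n + 1)) n = none := by
      obtain ⟨n, hn⟩ := h
      cases n with
      | zero => rw [h0] at hn; exact absurd hn (by simp)
      | succ m => exact ⟨m, hn⟩
    have hpos : 0 < Nat.find h := by
      apply Nat.pos_of_ne_zero
      intro hp
      have := Nat.find_spec h
      rw [hp, h0] at this
      exact absurd this (by simp)
    have hfind : Nat.find h = Nat.find h' + 1 := by
      have h1 : π (Nat.find h' + 1) = none := Nat.find_spec h'
      have le1 : Nat.find h ≤ Nat.find h' + 1 := Nat.find_le h1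
      have h2 : (fun n => π (n + 1)) (Nat.find h - 1) = none := by
        show π (Nat.find h - 1 + 1) = none
        have hh : Nat.find h - 1 + 1 = Nat.find h := by omega
        rw [hh]; exact Nat.find_spec h
      have le2 : Nat.find h' ≤ Nat.find h - 1 := Nat.find_le h2
      omega
    rw [PlayValue, dif_pos h, PlayValue, dif_pos h', addV]
    show _ = Prof.fin _
    rw [Prof.fin.injEq]
    funext k
    simp only [Pi.add_apply]
    rw [hfind]
    rw [Finset.card_filter, Finset.card_filter, Finset.sum_range_succ']
    have hc0 : ColorAt A π 0 k ↔ A.color u = k := by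
      constructor
      · rintro ⟨v, hv, hcv⟩
        rw [h0] at hv
        rw [Option.some_injective V hv]; exact hcv
      · intro hc; exact ⟨u, h0, hc⟩
    have hterm : (fun i => if ColorAt A π (i + 1) k then 1 else 0) =
        (fun i => if ColorAt A (fun n => π (n + 1)) i k then 1 else 0) := rfl
    rw [hterm]
    push_cast
    congr 1
    rw [unitProf]
    by_cases hck : A.color u = k
    · rw [if_pos (hc0.mpr hck), if_pos hck]
    · rw [if_neg (fun hc => hck (hc0.mp hc)), if_neg hck]
  · have h' : ¬ ∃ n, (fun n => π (n + 1)) n = none := by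
      rintro ⟨n, hn⟩
      exact h ⟨n + 1, hn⟩
    rw [PlayValue, dif_neg h, PlayValue, dif_neg h']
    have hw := won0B_tail A π
    by_cases hwon : Won0B A π
    · rw [if_pos hwon, if_pos (hw.mp hwon)]
      rfl
    · rw [if_neg hwon, if_neg (fun hc => hwon (hw.mpr hc))]
      rfl

theorem nat_infinite_ge {s : Set ℕ} (hs : s.Infinite) (N : ℕ) : ∃ n ∈ s, N ≤ n := by
  obtain ⟨n, hn, hlt⟩ := hs.exists_gt N
  exact ⟨n, hn, le_of_lt hlt⟩

theorem infinite_play_won [Fintype V] (A : PGA V d) (σ : V → Option V → Prop)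
    (hreas : Reasonable A σ) (f : ℕ → V)
    (hE : ∀ n, EdgeSig A σ (f n) (f (n + 1))) :
    Won0B A (fun n => some (f n)) := by
  classical
  set g : ℕ → Fin d := fun n => A.color (f n) with hg
  obtain ⟨k0, hk0⟩ := Finite.exists_infinite_fiber g
  have hk0' : (g ⁻¹' {k0}).Infinite := Set.infinite_coe_iff.mp hk0
  have hKne : (Finset.univ.filter (fun k : Fin d => (g ⁻¹' {k}).Infinite)).Nonempty :=
    ⟨k0, Finset.mem_filter.mpr ⟨Finset.mem_univ _, hk0'⟩⟩
  set K := Finset.univ.filter (fun k : Fin d => (g ⁻¹' {k}).Infinite) with hK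
  set k := K.max' hKne with hkdef
  have hkinf : (g ⁻¹' {k}).Infinite := (Finset.mem_filter.mp (K.max'_mem hKne)).2
  have hjfin : ∀ j : Fin d, k < j → (g ⁻¹' {j}).Finite := by
    intro j hj
    by_contra hc
    have : j ∈ K := Finset.mem_filter.mpr ⟨Finset.mem_univ _, hc⟩
    exact absurd (K.le_max' j this) (not_le.mpr hj)
  have hSfin : ({n | k < g n} : Set ℕ).Finite := by
    have hsub : ({n | k < g n} : Set ℕ) ⊆
        ⋃ j ∈ ({j : Fin d | k < j} : Set (Fin d)), g ⁻¹' {j} := by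
      intro n hn
      simp only [Set.mem_iUnion]
      exact ⟨g n, hn, rfl⟩
    exact Set.Finite.subset (Set.Finite.biUnion (Set.toFinite _)
      (fun j hj => hjfin j hj)) hsub
  obtain ⟨N₀, hN₀⟩ : ∃ N₀, ∀ n ≥ N₀, g n ≤ k := by
    obtain ⟨b, hb⟩ := hSfin.bddAbove
    refine ⟨b + 1, fun n hn => ?_⟩
    by_contra hc
    have : n ∈ {n | k < g n} := not_le.mp hc
    exact absurd (hb this) (by omega)
  haveI : Infinite ↥(g ⁻¹' {k}) := hkinf.to_subtype
  obtain ⟨v, hv⟩ := Finite.exists_infinite_fiber (fun n : ↥(g ⁻¹' {k}) => f n.1)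
  have hv' : ((fun n : ↥(g ⁻¹' {k}) => f n.1) ⁻¹' {v}).Infinite :=
    Set.infinite_coe_iff.mp hv
  have hvinf : ({n | g n = k ∧ f n = v} : Set ℕ).Infinite := by
    have himg : (Subtype.val '' ((fun n : ↥(g ⁻¹' {k}) => f n.1) ⁻¹' {v})).Infinite :=
      hv'.image Subtype.val_injective.injOn
    apply himg.mono
    rintro n ⟨⟨m, hm⟩, hm2, rfl⟩
    exact ⟨hm, hm2⟩
  obtain ⟨n₁, hn₁mem, hn₁⟩ := nat_infinite_ge hvinf (N₀ + 1)
  obtain ⟨n₂, hn₂mem, hn₂⟩ := hvinf.exists_gt n₁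
  obtain ⟨hgn₁, hfn₁⟩ := hn₁mem
  obtain ⟨hgn₂, hfn₂⟩ := hn₂mem
  set m := n₂ - n₁ with hm
  have hmpos : 0 < m := by omega
  obtain ⟨t, ht⟩ : ∃ t, m = t + 1 := ⟨m - 1, by omega⟩
  set L : List V := (List.range m).map (fun i => f (n₁ + i)) with hL
  have hmemL : ∀ w ∈ L, ∃ i, i < m ∧ w = f (n₁ + i) := by
    intro w hw
    rw [hL, List.mem_map] at hw
    obtain ⟨i, hi, hwi⟩ := hw
    exact ⟨i, List.mem_range.mp hi, hwi.symm⟩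
  have hcyc : CycleIn A σ L := by
    refine ⟨?_, ?_, ?_⟩
    · simp only [hL, ne_eq, List.map_eq_nil_iff, List.range_eq_nil]
      omega
    · change List.IsChain _ _
      rw [hL, List.isChain_map]
      rw [ht, List.isChain_range_succ]
      intro i hi
      have hh : n₁ + i + 1 = n₁ + (i + 1) := by omega
      have he := hE (n₁ + i)
      rwa [hh] at he
    · intro a b ha hb
      have hhead : L.head? = some (f (n₁ + 0)) := by
        rw [hL, ht, List.range_succ_eq_map]
        simp
      have hlast : L.getLast? = some (f (n₁ + t)) := by
        rw [hL, ht, List.range_succ, List.map_append]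
        simp
      rw [hhead] at ha
      rw [hlast] at hb
      have ha' : a = f (n₁ + 0) := (Option.some_injective _ ha).symm
      have hb' : b = f (n₁ + t) := (Option.some_injective _ hb).symm
      have he := hE (n₁ + t)
      have h2 : n₁ + t + 1 = n₂ := by omega
      rw [h2] at he
      have h3 : f n₂ = f (n₁ + 0) := by
        rw [hfn₂]
        have : n₁ + 0 = n₁ := by omega
        rw [this, hfn₁]
      rw [h3] at he
      rw [ha', hb']
      exact he
  have hvL : f (n₁ + 0) ∈ L := by
    rw [hL, List.mem_map]
    exact ⟨0, List.mem_range.mpr (by omega), rfl⟩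
  have hdom : ∀ w ∈ L, A.color w ≤ A.color (f (n₁ + 0)) := by
    intro w hw
    obtain ⟨i, hi, hwi⟩ := hmemL w hw
    have h1 : g (n₁ + i) ≤ k := hN₀ (n₁ + i) (by omega)
    have h2 : A.color (f (n₁ + 0)) = k := by
      have : n₁ + 0 = n₁ := by omega
      rw [this]; exact hgn₁
    rw [hwi, h2]
    exact h1
  have heven : Even ((A.color (f (n₁ + 0)) : ℕ)) := hreas L hcyc _ hvL hdom
  have hck : A.color (f (n₁ + 0)) = k := by
    have : n₁ + 0 = n₁ := by omega
    rw [this]; exact hgn₁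
  refine ⟨k, by rw [← hck]; exact heven, ?_, ?_⟩
  · intro N
    obtain ⟨n, hnmem, hn⟩ := nat_infinite_ge hvinf N
    exact ⟨n, hn, ⟨f n, rfl, hnmem.1⟩⟩
  · intro j hj
    obtain ⟨b, hb⟩ := (hjfin j hj).bddAbove
    refine ⟨b + 1, fun n hn hc => ?_⟩
    obtain ⟨w, hw, hcw⟩ := hc
    have hwn : w = f n := Option.some_injective _ hw.symm
    have : n ∈ g ⁻¹' {j} := by
      simp only [Set.mem_preimage, Set.mem_singleton_iff, hg]
      rw [← hwn]; exact hcw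
    exact absurd (hb this) (by omega)

end Plays


section Valuation

variable {V : Type} {d : ℕ}

theorem playValue_ne_bot [Fintype V] (A : PGA V d) (σ : V → Option V → Prop)
    (τ : V → V → Prop) (hτ : Strategy1 A τ) (hreas : Reasonable A σ) (s : V)
    (π : ℕ → Option V) (hπ : IsPlay A σ τ s π) : PlayValue A π ≠ Prof.bot := by
  classical
  rw [PlayValue]
  split_ifs with h1 h2
  · simp
  · simp
  · exfalso
    apply h2
    have hs : ∀ n, ∃ u, π n = some u := by
      intro n
      cases hu : π n with
      | none => exact absurd ⟨n, hu⟩ h1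
      | some u => exact ⟨u, rfl⟩
    choose f hf using hs
    have hE : ∀ n, EdgeSig A σ (f n) (f (n + 1)) := by
      intro n
      have hstep := hπ.2 n
      rw [hf n] at hstep
      rcases hstep with ⟨h0, hσ'⟩ | ⟨h1', w, hw, hτ'⟩
      · right
        rwa [hf (n + 1)] at hσ'
      · left
        refine ⟨h1', ?_⟩
        have : f (n + 1) = w := by
          have := hf (n + 1)
          rw [hw] at this
          exact Option.some_injective _ this.symm
        rw [this]
        exact (hτ.1 _ _ hτ').2
    have hwon := infinite_play_won A σ hreas f hE
    have hfun : (fun n => some (f n)) = π := funext fun n => (hf n).symm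
    rwa [hfun] at hwon

theorem vsig_ne_bot [Fintype V] (A : PGA V d) (σ : V → Option V → Prop)
    (Vσ : Option V → Prof d) (hreas : Reasonable A σ) (hV : IsValuation A σ Vσ) (v : V) :
    Vσ (some v) ≠ Prof.bot := by
  obtain ⟨τ, hτ, hmax⟩ := (hV.2 v).1
  obtain ⟨π, hπ, hval⟩ := hmax.1
  rw [hval]
  exact playValue_ne_bot A σ τ hτ hreas v π hπ

theorem claimB [Fintype V] (A : PGA V d) (σ : V → Option V → Prop)
    (Vσ : Option V → Prof d) (hreas : Reasonable A σ) (hV : IsValuation A σ Vσ)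
    (u : V) (hu : A.owner u = 1) :
    ∃ w, A.edge u w ∧ Prof.Le (addV A u (Vσ (some w))) (Vσ (some u)) := by
  classical
  obtain ⟨τ, hτ, hmax⟩ := (hV.2 u).1
  obtain ⟨π, hπ, hval⟩ := hmax.1
  have hstep := hπ.2 0
  rw [hπ.1] at hstep
  rcases hstep with ⟨h0, _⟩ | ⟨_, w₀, hw1, hτw⟩
  · rw [hu] at h0
    exact absurd h0 (by decide)
  have hedge : A.edge u w₀ := (hτ.1 u w₀ hτw).2
  have hρplay : IsPlay A σ τ w₀ (fun n => π (n + 1)) := ⟨hw1, fun n => hπ.2 (n + 1)⟩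
  have hshift : PlayValue A π = addV A u (PlayValue A (fun n => π (n + 1))) :=
    playValue_tail A π u hπ.1
  have hmaxρ : IsMaxOf {q | ∃ π', IsPlay A σ τ w₀ π' ∧ q = PlayValue A π'}
      (PlayValue A (fun n => π (n + 1))) := by
    refine ⟨⟨_, hρplay, rfl⟩, ?_⟩
    rintro q ⟨ρ', hρ', rfl⟩
    set π'' : ℕ → Option V := fun n => if n = 0 then some u else ρ' (n - 1) with hπ''
    have hπ''play : IsPlay A σ τ u π'' := by
      refine ⟨by simp [hπ''], fun n => ?_⟩
      cases n with
      | zero =>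
        show PlayStep A σ τ (some u) (π'' 1)
        right
        refine ⟨hu, w₀, ?_, hτw⟩
        show (if 1 = 0 then some u else ρ' (1 - 1)) = some w₀
        simp [hρ'.1]
      | succ m =>
        have e1 : π'' (m + 1) = ρ' m := by simp [hπ'']
        have e2 : π'' (m + 1 + 1) = ρ' (m + 1) := by simp [hπ'']
        rw [e1, e2]
        exact hρ'.2 m
    have hle := hmax.2 (PlayValue A π'') ⟨π'', hπ''play, rfl⟩
    have htail : (fun n => π'' (n + 1)) = ρ' := by
      funext n; simp [hπ'']
    have h2 : PlayValue A π'' = addV A u (PlayValue A ρ') := by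
      rw [playValue_tail A π'' u (by simp [hπ'']), htail]
    rw [h2, hval, hshift] at hle
    exact prof_le_of_add_le_add hle
  have hmin := (hV.2 w₀).2 (PlayValue A (fun n => π (n + 1))) ⟨τ, hτ, hmaxρ⟩
  refine ⟨w₀, hedge, ?_⟩
  rw [hval, hshift]
  exact prof_add_le_add _ hmin

theorem claimA (A : PGA V d) (σ : V → Option V → Prop) (Vσ : Option V → Prof d)
    (hno : ∀ s t, ¬ StrictImp A Vσ s t) (u w : V) (hu : A.owner u = 0)
    (he : A.edge u w) : Prof.Le (addV A u (Vσ (some w))) (Vσ (some u)) := by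
  apply prof_le_of_not_lt
  intro hlt
  exact hno u (some w) ⟨hu, he, hlt⟩

end Valuation


/-- Extract the finite part of a profile. -/
def profFun {d : ℕ} : Prof d → (Fin d → ℤ)
  | .fin p => p
  | _ => 0

theorem fin_two_eq_one {x : Fin 2} (h : x ≠ 0) : x = 1 := by
  omega

/-- **Lemma 3, contrapositive form.** If a reasonable strategy `σ` admits
no strict improvement, then `𝒱_σ(s) = ∞` for every node `s` in player 0's winning set
`W_0` of the underlying parity game. -/
theorem no_strict_improvement_wins_W0 {V : Type} {d : ℕ} [Fintype V] (A : PGA V d)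
    (σ : V → Option V → Prop) (Vσ : Option V → Prof d)
    (hσ : Strategy0 A σ) (hreas : Reasonable A σ) (hV : IsValuation A σ Vσ)
    (hno : ∀ s t, ¬ StrictImp A Vσ s t) :
    ∀ s : V, Win0 A s → Vσ (some s) = .top := by
  classical
  intro s hwin
  by_contra hstop
  obtain ⟨ς, hς, hςwin⟩ := hwin
  have hone : ∀ u : V, A.owner u ≠ 0 → A.owner u = 1 := fun u h => fin_two_eq_one h
  -- the next-step function of the hybrid play
  obtain ⟨nxt, hnxt⟩ : ∃ nxt : V → V, ∀ u,
      (A.owner u = 0 → ς u (nxt u)) ∧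
      (A.owner u = 1 → A.edge u (nxt u) ∧
        Prof.Le (addV A u (Vσ (some (nxt u)))) (Vσ (some u))) := by
    refine ⟨fun u => if h : A.owner u = 0 then Classical.choose (hς.2 u h)
      else Classical.choose (claimB A σ Vσ hreas hV u (hone u h)), fun u => ⟨?_, ?_⟩⟩
    · intro h0
      dsimp only
      rw [dif_pos h0]
      exact Classical.choose_spec (hς.2 u h0)
    · intro h1
      have hne : A.owner u ≠ 0 := by rw [h1]; decide
      dsimp only
      rw [dif_neg hne]
      exact Classical.choose_spec (claimB A σ Vσ hreas hV u (hone u hne))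
  set π : ℕ → V := fun n => nxt^[n] s with hπdef
  have hπ0 : π 0 = s := rfl
  have hπs : ∀ n, π (n + 1) = nxt (π n) := fun n => Function.iterate_succ_apply' nxt n s
  have hstep : ∀ n, (A.owner (π n) = 0 → ς (π n) (π (n + 1))) ∧
      (A.owner (π n) = 1 → A.edge (π n) (π (n + 1))) ∧
      Prof.Le (addV A (π n) (Vσ (some (π (n + 1))))) (Vσ (some (π n))) := by
    intro n
    rw [hπs n]
    by_cases h : A.owner (π n) = 0
    · have hc := (hnxt (π n)).1 h
      refine ⟨fun _ => hc, fun h1 => absurd (h.symm.trans h1) (by decide), ?_⟩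
      exact claimA A σ Vσ hno (π n) (nxt (π n)) h ((hς.1 _ _ hc).2)
    · obtain ⟨he, hle⟩ := (hnxt (π n)).2 (hone _ h)
      exact ⟨fun h0 => absurd h0 h, fun _ => he, hle⟩
  have hplay : PlayA A ς s π := ⟨hπ0, fun n => ⟨(hstep n).1, (hstep n).2.1⟩⟩
  have hwon := hςwin π hplay
  have hnb : ∀ v : V, Vσ (some v) ≠ Prof.bot := vsig_ne_bot A σ Vσ hreas hV
  have hfin : ∀ n, ∃ p, Vσ (some (π n)) = Prof.fin p := by
    intro n
    induction n with
    | zero =>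
      rw [hπ0]
      cases hv : Vσ (some s) with
      | bot => exact absurd hv (hnb s)
      | fin p => exact ⟨p, rfl⟩
      | top => exact absurd hv hstop
    | succ m ih =>
      obtain ⟨p, hp⟩ := ih
      have hle := (hstep m).2.2
      cases hv : Vσ (some (π (m + 1))) with
      | bot => exact absurd hv (hnb _)
      | fin q => exact ⟨q, rfl⟩
      | top =>
        exfalso
        rw [hv, hp] at hle
        have hle' : Prof.Le Prof.top (Prof.fin p) := hle
        exact absurd (prof_top_le hle') (by simp)
  choose p hp using hfin
  have hinv : ∀ n, p (n + 1) + unitProf A (π n) = p n ∨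
      FinLt (p (n + 1) + unitProf A (π n)) (p n) := by
    intro n
    have h := (hstep n).2.2
    rw [hp n, hp (n + 1)] at h
    have h' : Prof.Le (Prof.fin (p (n + 1) + unitProf A (π n))) (Prof.fin (p n)) := h
    rcases h' with he | hl
    · left
      simpa [Prof.fin.injEq] using he
    · right
      exact hl
  obtain ⟨k, hkeven, hkio, hkfin⟩ := hwon
  -- a uniform bound after which only colors ≤ k occur
  choose Nj hNj using hkfin
  obtain ⟨N₀, hN₀⟩ : ∃ N₀, ∀ n, N₀ ≤ n → ∀ j : Fin d, k < j → A.color (π n) ≠ j := by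
    refine ⟨(Finset.univ : Finset (Fin d)).sup (fun j => if h : k < j then Nj j h else 0),
      fun n hn j hj => ?_⟩
    have hle : (if h : k < j then Nj j h else 0) ≤
        (Finset.univ : Finset (Fin d)).sup (fun j => if h : k < j then Nj j h else 0) :=
      Finset.le_sup (f := fun j => if h : k < j then Nj j h else 0) (Finset.mem_univ j)
    rw [dif_pos hj] at hle
    exact hNj j hj n (le_trans hle hn)
  have hu0 : ∀ n, N₀ ≤ n → ∀ j, k < j → unitProf A (π n) j = 0 := by
    intro n hn j hj
    rw [unitProf, if_neg (hN₀ n hn j hj)]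
  -- the truncated sequence above k
  set hsq : ℕ → Fin d → ℤ := fun n j => if k < j then p n j else 0 with hsqdef
  have hstep2 : ∀ n, N₀ ≤ n → hsq (n + 1) = hsq n ∨ FinLt (hsq (n + 1)) (hsq n) := by
    intro n hn
    rcases hinv n with heq | hlt
    · left
      funext j
      by_cases hj : k < j
      · simp only [hsqdef, if_pos hj]
        have := congrFun heq j
        rw [Pi.add_apply, hu0 n hn j hj, add_zero] at this
        exact this
      · simp [hsqdef, hj]
    · obtain ⟨i, hne, hab, hpar⟩ := hlt
      by_cases hik : k < i
      · right
        have hui : unitProf A (π n) i = 0 := hu0 n hn i hik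
        refine ⟨i, ?_, ?_, ?_⟩
        · simp only [hsqdef, if_pos hik]
          intro hcon
          apply hne
          rw [Pi.add_apply, hui, add_zero]
          exact hcon
        · intro j hj
          have hkj : k < j := lt_trans hik hj
          have := hab j hj
          rw [Pi.add_apply, hu0 n hn j hkj, add_zero] at this
          simp only [hsqdef, if_pos hkj]
          exact this
        · rcases hpar with ⟨hev, hlt'⟩ | ⟨hod, hlt'⟩
          · left
            refine ⟨hev, ?_⟩
            simp only [hsqdef, if_pos hik]
            rw [Pi.add_apply, hui, add_zero] at hlt'
            exact hlt'
          · right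
            refine ⟨hod, ?_⟩
            simp only [hsqdef, if_pos hik]
            rw [Pi.add_apply, hui, add_zero] at hlt'
            exact hlt'
      · left
        funext j
        by_cases hj : k < j
        · have hij : i < j := lt_of_le_of_lt (not_lt.mp hik) hj
          have := hab j hij
          rw [Pi.add_apply, hu0 n hn j hj, add_zero] at this
          simp only [hsqdef, if_pos hj]
          exact this
        · simp [hsqdef, hj]
  have hmono : ∀ m n, N₀ ≤ m → m ≤ n → FinLe (hsq n) (hsq m) := by
    intro m n hm hmn
    induction n, hmn using Nat.le_induction with
    | base => exact finLe_refl _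
    | succ n hmn ih =>
      rcases hstep2 n (le_trans hm hmn) with he | hl
      · rw [he]; exact ih
      · exact finLe_trans (Or.inr hl) ih
  have hconst : ∃ N₁, N₀ ≤ N₁ ∧ ∀ n, N₁ ≤ n → hsq n = hsq N₁ := by
    by_contra hc
    push_neg at hc
    have next : ∀ m, N₀ ≤ m → ∃ n, N₀ ≤ n ∧ FinLt (hsq n) (hsq m) := by
      intro m hm
      obtain ⟨n, hn, hne⟩ := hc m hm
      rcases hmono m n hm hn with he | hl
      · exact absurd he hne
      · exact ⟨n, le_trans hm hn, hl⟩
    have step : ∀ x : {m : ℕ // N₀ ≤ m}, ∃ y : {m : ℕ // N₀ ≤ m},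
        FinLt (hsq y.1) (hsq x.1) := by
      rintro ⟨m, hm⟩
      obtain ⟨n, hn1, hn2⟩ := next m hm
      exact ⟨⟨n, hn1⟩, hn2⟩
    choose F hF using step
    set g : ℕ → {m : ℕ // N₀ ≤ m} := fun i => F^[i] ⟨N₀, le_refl N₀⟩ with hgdef
    have hgdec : ∀ i, FinLt (hsq (g (i + 1)).1) (hsq (g i).1) := by
      intro i
      have hgs : g (i + 1) = F (g i) := Function.iterate_succ_apply' F i _
      rw [hgs]
      exact hF (g i)
    have hchain : ∀ i j, i < j → FinLt (hsq (g j).1) (hsq (g i).1) := by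
      intro i j hij
      induction j, hij using Nat.le_induction with
      | base => exact hgdec i
      | succ j hij ih => exact finLt_trans (hgdec j) ih
    have hinj : Function.Injective (fun i => π (g i).1) := by
      intro i j hij
      by_contra hne
      have hpeq : p (g i).1 = p (g j).1 := by
        have h1 := hp (g i).1
        have h2 := hp (g j).1
        simp only at hij
        rw [hij, h2] at h1
        simpa [Prof.fin.injEq] using h1.symm
      have hsame : hsq (g i).1 = hsq (g j).1 := by
        funext j'
        simp only [hsqdef, hpeq]
      rcases lt_or_gt_of_ne hne with hlt | hlt
      · have := hchain i j hlt
        rw [hsame] at this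
        exact finLt_irrefl _ this
      · have := hchain j i hlt
        rw [hsame] at this
        exact finLt_irrefl _ this
    haveI := Finite.of_injective _ hinj
    exact not_finite ℕ
  obtain ⟨N₁, hN₁0, hN₁⟩ := hconst
  have habove : ∀ n, N₁ ≤ n → ∀ j, k < j → p n j = p N₁ j := by
    intro n hn j hj
    have h1 := congrFun (hN₁ n hn) j
    simp only [hsqdef, if_pos hj] at h1
    exact h1
  -- telescoping
  set csum : ℕ → Fin d → ℤ := fun n => ∑ i ∈ Finset.Ico N₁ n, unitProf A (π i) with hcsum
  have htel : ∀ n, N₁ ≤ n → FinLe (p n + csum n) (p N₁) := by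
    intro n hn
    induction n, hn using Nat.le_induction with
    | base =>
      have : csum N₁ = 0 := by simp [hcsum]
      rw [this, add_zero]
      exact finLe_refl _
    | succ n hn ih =>
      have h1 : FinLe (p (n + 1) + unitProf A (π n)) (p n) := hinv n
      have h2 := finLe_add_right (csum n) h1
      have h3 : csum (n + 1) = csum n + unitProf A (π n) := by
        simp only [hcsum]
        rw [Finset.sum_Ico_succ_top hn]
      rw [h3]
      have h4 : p (n + 1) + (csum n + unitProf A (π n)) =
          p (n + 1) + unitProf A (π n) + csum n := by ring
      rw [h4]
      exact finLe_trans h2 ih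
  -- many occurrences of color k
  have hmany : ∀ m : ℕ, ∃ n, N₁ ≤ n ∧ (m : ℤ) ≤ csum n k := by
    intro m
    induction m with
    | zero => exact ⟨N₁, le_refl _, by simp [hcsum]⟩
    | succ m ih =>
      obtain ⟨n, hn, hcn⟩ := ih
      obtain ⟨n', hn', hcol⟩ := hkio n
      refine ⟨n' + 1, by omega, ?_⟩
      have hsplit : csum (n' + 1) = csum n + ∑ i ∈ Finset.Ico n (n' + 1), unitProf A (π i) := by
        simp only [hcsum]
        rw [← Finset.sum_Ico_consecutive _ hn (by omega : n ≤ n' + 1)]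
      have hone' : (1 : ℤ) ≤ ∑ i ∈ Finset.Ico n (n' + 1), (unitProf A (π i)) k := by
        have hmem : n' ∈ Finset.Ico n (n' + 1) := Finset.mem_Ico.mpr ⟨hn', by omega⟩
        have hterm : unitProf A (π n') k = 1 := by rw [unitProf, if_pos hcol]
        calc (1 : ℤ) = unitProf A (π n') k := hterm.symm
          _ ≤ ∑ i ∈ Finset.Ico n (n' + 1), (unitProf A (π i)) k := by
              apply Finset.single_le_sum (fun i _ => ?_) hmem
              rw [unitProf]
              split_ifs <;> norm_num
      have happ : csum (n' + 1) k = csum n k + ∑ i ∈ Finset.Ico n (n' + 1), (unitProf A (π i)) k := by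
        rw [hsplit, Pi.add_apply, Finset.sum_apply]
      rw [happ]
      push_cast
      linarith
  -- the bound on valuation entries
  set B : ℕ := (Finset.univ : Finset V).sup (fun v => (profFun (Vσ (some v)) k).natAbs)
    with hB
  have hpB : ∀ n, -(B : ℤ) ≤ p n k ∧ p n k ≤ (B : ℤ) := by
    intro n
    have h1 : profFun (Vσ (some (π n))) = p n := by rw [hp n]; rfl
    have h2 : (p n k).natAbs ≤ B := by
      rw [← h1]
      exact Finset.le_sup (f := fun v => (profFun (Vσ (some v)) k).natAbs)
        (Finset.mem_univ (π n))
    have h3 : ((p n k).natAbs : ℤ) ≤ (B : ℤ) := by exact_mod_cast h2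
    rw [← Int.abs_eq_natAbs] at h3
    exact abs_le.mp h3
  obtain ⟨n, hn, hck⟩ := hmany (2 * B + 1)
  have hle := htel n hn
  have hak : p N₁ k < (p n + csum n) k := by
    rw [Pi.add_apply]
    have h1 := hpB n
    have h2 := hpB N₁
    push_cast at hck
    linarith [h1.1, h2.2]
  have haj : ∀ j, k < j → (p n + csum n) j = p N₁ j := by
    intro j hj
    have hcj : csum n j = 0 := by
      simp only [hcsum, Finset.sum_apply]
      apply Finset.sum_eq_zero
      intro i hi
      have hiN : N₀ ≤ i := le_trans hN₁0 (Finset.mem_Ico.mp hi).1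
      exact hu0 i hiN j hj
    rw [Pi.add_apply, hcj, add_zero]
    exact habove n hn j hj
  rcases hle with he | hlt
  · have := congrFun he k
    rw [this] at hak
    exact lt_irrefl _ hak
  · obtain ⟨i, hne, hab, hpar⟩ := hlt
    rcases lt_trichotomy i k with h | h | h
    · have := hab k h
      rw [this] at hak
      exact lt_irrefl _ hak
    · subst h
      rcases hpar with ⟨hev, hlt'⟩ | ⟨hod, hlt'⟩
      · exact absurd hlt' (not_lt.mpr (le_of_lt hak))
      · exact absurd hod (by simpa using (Nat.not_odd_iff_even.mpr hkeven))
    · exact hne (haj i h)
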